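/- Theorem 4.2 (uniform query model, comparison form): let T be a finite set of tokens and let 𝒢_1, …, 𝒢_n and 𝒢'_1, …, 𝒢'_n be two families of groups of finite subsets of T in which every group (in both families) contains exactly c sets, and let 1 ≤ m ≤ |T|. If Σ_{g=1}^{n} |GS(𝒢_g)| ≤ Σ_{g=1}^{n} |GS(𝒢'_g)|, then Σ_{Q ⊆ T, |Q| = m} Σ_{g=1}^{n} |𝒢_g| · (1 − |GS(𝒢_g) ∩ Q| / m) ≥ Σ_{Q ⊆ T, |Q| = m} Σ_{g=1}^{n} |𝒢'_g| · (1 − |GS(𝒢'_g) ∩ Q| / m); that is, among balanced partitionings, the one minimizing U = Σ_g |⋃_{S ∈ 𝒢_g} S| provides the highest expected pruning efficiency over queries drawn uniformly among m-element subsets of T. -/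

import Mathlib

open Finset

private lemma count_mem_powersetCard {α : Type*} [DecidableEq α] (T : Finset α) (m : ℕ)
    (hm : 1 ≤ m) (x : α) (hx : x ∈ T) :
    ((T.powersetCard m).filter (fun Q => x ∈ Q)).card = (T.card - 1).choose (m - 1) := by
  rw [← card_erase_of_mem hx, ← card_powersetCard]
  apply Finset.card_bij (fun Q _ => Q.erase x)
  · intro Q hQ
    simp only [mem_filter, mem_powersetCard] at hQ ⊢
    exact ⟨erase_subset_erase x hQ.1.1, by rw [card_erase_of_mem hQ.2, hQ.1.2]⟩
  · intro Q hQ Q' hQ' h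
    simp only [mem_filter] at hQ hQ'
    rw [← insert_erase hQ.2, ← insert_erase hQ'.2, h]
  · intro Q hQ
    simp only [mem_powersetCard] at hQ
    have hxQ : x ∉ Q := fun h => (mem_erase.1 (hQ.1 h)).1 rfl
    refine ⟨insert x Q, ?_, by rw [erase_insert hxQ]⟩
    simp only [mem_filter, mem_powersetCard, mem_insert, true_or, and_true]
    exact ⟨insert_subset hx (hQ.1.trans (erase_subset x T)),
      by rw [card_insert_of_notMem hxQ, hQ.2]; omega⟩

private lemma sum_inter_card {α : Type*} [DecidableEq α] (T S : Finset α) (m : ℕ)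
    (hm : 1 ≤ m) (hS : S ⊆ T) :
    ∑ Q ∈ T.powersetCard m, (S ∩ Q).card = S.card * (T.card - 1).choose (m - 1) := by
  have h1 : ∀ Q : Finset α, (S ∩ Q).card = ∑ x ∈ S, if x ∈ Q then 1 else 0 := by
    intro Q
    rw [← Finset.filter_mem_eq_inter, Finset.card_filter]
  calc ∑ Q ∈ T.powersetCard m, (S ∩ Q).card
      = ∑ Q ∈ T.powersetCard m, ∑ x ∈ S, if x ∈ Q then 1 else 0 := by
        exact Finset.sum_congr rfl fun Q _ => h1 Q
    _ = ∑ x ∈ S, ∑ Q ∈ T.powersetCard m, if x ∈ Q then 1 else 0 := Finset.sum_comm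
    _ = ∑ x ∈ S, ((T.powersetCard m).filter (fun Q => x ∈ Q)).card := by
        exact Finset.sum_congr rfl fun x _ => (Finset.card_filter _ _).symm
    _ = ∑ x ∈ S, (T.card - 1).choose (m - 1) := by
        refine Finset.sum_congr rfl fun x hx => count_mem_powersetCard T m hm x (hS hx)
    _ = S.card * (T.card - 1).choose (m - 1) := by
        rw [Finset.sum_const, smul_eq_mul]

private lemma family_sum_eq {α : Type*} [DecidableEq α]
    (T : Finset α) (n c : ℕ) (G : Fin n → Finset (Finset α))
    (hGT : ∀ g, ∀ S ∈ G g, S ⊆ T) (hc : ∀ g, (G g).card = c) (m : ℕ) (hm : 1 ≤ m) :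
    ∑ Q ∈ T.powersetCard m, ∑ g : Fin n,
        ((G g).card : ℝ) * (1 - (((G g).sup id ∩ Q).card : ℝ) / (m : ℝ))
      = (n * c * (T.card.choose m) : ℝ)
        - (c : ℝ) / m * ((T.card - 1).choose (m - 1))
            * ∑ g : Fin n, (((G g).sup id).card : ℝ) := by
  have hsub : ∀ g : Fin n, (G g).sup id ⊆ T := fun g =>
    Finset.sup_le fun S hS => hGT g S hS
  have key : ∀ g : Fin n,
      ∑ Q ∈ T.powersetCard m, ((((G g).sup id) ∩ Q).card : ℝ)
        = (((G g).sup id).card : ℝ) * ((T.card - 1).choose (m - 1)) := by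
    intro g
    rw [← Nat.cast_sum, sum_inter_card T _ m hm (hsub g)]
    push_cast
    ring
  have hsum : ∀ g : Fin n,
      ∑ Q ∈ T.powersetCard m, (c : ℝ)/m * ((((G g).sup id) ∩ Q).card : ℝ)
        = (c : ℝ)/m * ((((G g).sup id).card : ℝ) * ((T.card - 1).choose (m - 1))) := by
    intro g
    rw [← Finset.mul_sum, key g]
  calc ∑ Q ∈ T.powersetCard m, ∑ g : Fin n,
        ((G g).card : ℝ) * (1 - (((G g).sup id ∩ Q).card : ℝ) / (m : ℝ))
      = ∑ Q ∈ T.powersetCard m, ∑ g : Fin n,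
          ((c : ℝ) - (c : ℝ)/m * (((G g).sup id ∩ Q).card : ℝ)) := by
        refine Finset.sum_congr rfl fun Q _ => Finset.sum_congr rfl fun g _ => ?_
        rw [hc g]; ring
    _ = (∑ Q ∈ T.powersetCard m, ∑ g : Fin n, (c : ℝ))
        - ∑ Q ∈ T.powersetCard m, ∑ g : Fin n,
            (c : ℝ)/m * (((G g).sup id ∩ Q).card : ℝ) := by
        rw [← Finset.sum_sub_distrib]
        exact Finset.sum_congr rfl fun Q _ => Finset.sum_sub_distrib _ _
    _ = (n * c * (T.card.choose m) : ℝ)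
        - (c : ℝ) / m * ((T.card - 1).choose (m - 1))
            * ∑ g : Fin n, (((G g).sup id).card : ℝ) := by
        congr 1
        · simp [Finset.sum_const, Finset.card_powersetCard, mul_comm, mul_assoc, mul_left_comm]
        · rw [Finset.sum_comm]
          rw [Finset.sum_congr rfl fun g (_ : g ∈ Finset.univ) => hsum g, ← Finset.mul_sum,
            Finset.mul_sum, Finset.mul_sum]
          exact Finset.sum_congr rfl fun g _ => by ring

theorem balanced_partition_min_union_max_pe {α : Type*} [DecidableEq α]
    (T : Finset α) (n c : ℕ) (G G' : Fin n → Finset (Finset α))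
    (hGT : ∀ g, ∀ S ∈ G g, S ⊆ T) (hG'T : ∀ g, ∀ S ∈ G' g, S ⊆ T)
    (hc : ∀ g, (G g).card = c) (hc' : ∀ g, (G' g).card = c)
    (m : ℕ) (hm1 : 1 ≤ m) (hm2 : m ≤ T.card)
    (hU : ∑ g : Fin n, ((G g).sup id).card ≤ ∑ g : Fin n, ((G' g).sup id).card) :
    ∑ Q ∈ T.powersetCard m, ∑ g : Fin n,
        ((G g).card : ℝ) * (1 - (((G g).sup id ∩ Q).card : ℝ) / (m : ℝ)) ≥
      ∑ Q ∈ T.powersetCard m, ∑ g : Fin n,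
        ((G' g).card : ℝ) * (1 - (((G' g).sup id ∩ Q).card : ℝ) / (m : ℝ)) := by
  rw [family_sum_eq T n c G hGT hc m hm1, family_sum_eq T n c G' hG'T hc' m hm1]
  have hfac : (0:ℝ) ≤ (c : ℝ) / m * ((T.card - 1).choose (m - 1)) := by positivity
  have hUr : (∑ g : Fin n, (((G g).sup id).card : ℝ))
      ≤ ∑ g : Fin n, (((G' g).sup id).card : ℝ) := by
    rw [← Nat.cast_sum, ← Nat.cast_sum]; exact_mod_cast hU
  nlinarith [mul_le_mul_of_nonneg_left hUr hfac]
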